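/- If the initial velocity of a solution (γ, b) of the conformal circle system is non-null, then γ'(τ) is non-null for all τ in the domain; indeed ⟨γ',γ'⟩ is either identically zero on a connected domain or never zero, since d/dτ ⟨γ',γ'⟩ = 2⟨∇_{γ'}γ', γ'⟩ = −2 b(γ')·⟨γ',γ'⟩ along solutions. -/

import Mathlib

lemma cc_inner_sum (n : ℕ) (g ginv : Matrix (Fin n) (Fin n) ℝ)
    (v bb : Fin n → ℝ) (i : Fin n) :
    (∑ j, ∑ k, ∑ l, ((if j = i then (1:ℝ) else 0) * (if k = l then (1:ℝ) else 0)
        + (if j = l then (1:ℝ) else 0) * (if k = i then (1:ℝ) else 0)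
        - g j k * ginv i l) * bb l * v j * v k)
      = 2 * (∑ l, bb l * v l) * v i
        - (∑ l, ginv i l * bb l) * (∑ j, ∑ k, g j k * v j * v k) := by
  simp only [add_mul, sub_mul, Finset.sum_add_distrib, Finset.sum_sub_distrib,
    ite_mul, one_mul, zero_mul, Finset.sum_ite_eq, Finset.sum_ite_eq',
    Finset.mem_univ, if_true]
  ring_nf
  simp [Finset.mul_sum, Finset.sum_mul]
  ring_nf
  rw [Finset.sum_mul]
  congr 1
  · exact Finset.sum_congr rfl fun x _ => Finset.sum_congr rfl fun y _ =>
      Finset.sum_congr rfl fun z _ => by ring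

lemma cc_key (n : ℕ) (g ginv : Matrix (Fin n) (Fin n) ℝ)
    (hsymm : ∀ i j, g i j = g j i)
    (hinv : ∀ m l, (∑ i, g m i * ginv i l) = if m = l then (1:ℝ) else 0)
    (v bb : Fin n → ℝ) :
    ∑ i, ∑ j, g i j * ((∑ l, ginv i l * bb l) * v j) = ∑ l, bb l * v l := by
  have h2 : ∀ j l, (∑ i, g i j * ginv i l) = if j = l then (1:ℝ) else 0 := fun j l => by
    rw [← hinv j l]; exact Finset.sum_congr rfl fun i _ => by rw [hsymm i j]
  calc ∑ i, ∑ j, g i j * ((∑ l, ginv i l * bb l) * v j)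
      = ∑ j, ∑ l, (∑ i, g i j * ginv i l) * (bb l * v j) := by
        rw [Finset.sum_comm]
        refine Finset.sum_congr rfl fun j _ => ?_
        simp only [Finset.mul_sum, Finset.sum_mul]
        rw [Finset.sum_comm]
        exact Finset.sum_congr rfl fun l _ => Finset.sum_congr rfl fun i _ => by ring
    _ = ∑ l, bb l * v l := by
        simp [h2, ite_mul, Finset.sum_ite_eq, Finset.sum_ite_eq']

lemma cc_alg (n : ℕ) (g ginv : Matrix (Fin n) (Fin n) ℝ)
    (hsymm : ∀ i j, g i j = g j i)
    (hinv : ∀ m l, (∑ i, g m i * ginv i l) = if m = l then (1:ℝ) else 0)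
    (v bb : Fin n → ℝ) :
    ∑ i, ∑ j, g i j *
      ((-(∑ p, ∑ k, ∑ l, ((if p = i then (1:ℝ) else 0) * (if k = l then (1:ℝ) else 0)
          + (if p = l then (1:ℝ) else 0) * (if k = i then (1:ℝ) else 0)
          - g p k * ginv i l) * bb l * v p * v k)) * v j
        + v i * (-(∑ p, ∑ k, ∑ l, ((if p = j then (1:ℝ) else 0) * (if k = l then (1:ℝ) else 0)
          + (if p = l then (1:ℝ) else 0) * (if k = j then (1:ℝ) else 0)
          - g p k * ginv j l) * bb l * v p * v k)))
    = -2 * (∑ l, bb l * v l) * (∑ i, ∑ j, g i j * v i * v j) := by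
  have hin := cc_inner_sum n g ginv v bb
  set c := ∑ l, bb l * v l with hc
  set Q := ∑ i, ∑ j, g i j * v i * v j with hQdef
  have key1 := cc_key n g ginv hsymm hinv v bb
  have key2 : ∑ i, ∑ j, g i j * (v i * (∑ l, ginv j l * bb l)) = c := by
    rw [Finset.sum_comm, hc, ← key1]
    exact Finset.sum_congr rfl fun j _ => Finset.sum_congr rfl fun i _ => by
      rw [hsymm i j]; ring
  calc ∑ i, ∑ j, g i j *
      ((-(∑ p, ∑ k, ∑ l, ((if p = i then (1:ℝ) else 0) * (if k = l then (1:ℝ) else 0)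
          + (if p = l then (1:ℝ) else 0) * (if k = i then (1:ℝ) else 0)
          - g p k * ginv i l) * bb l * v p * v k)) * v j
        + v i * (-(∑ p, ∑ k, ∑ l, ((if p = j then (1:ℝ) else 0) * (if k = l then (1:ℝ) else 0)
          + (if p = l then (1:ℝ) else 0) * (if k = j then (1:ℝ) else 0)
          - g p k * ginv j l) * bb l * v p * v k)))
      = ∑ i, ∑ j, ((-2*c)*(g i j * v i * v j)
          + Q*(g i j * ((∑ l, ginv i l * bb l) * v j))
          + ((-2*c)*(g i j * v i * v j)
          + Q*(g i j * (v i * (∑ l, ginv j l * bb l))))) := by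
        refine Finset.sum_congr rfl fun i _ => Finset.sum_congr rfl fun j _ => ?_
        rw [hin i, hin j]; ring
    _ = (-2*c)*Q + Q*(∑ i, ∑ j, g i j * ((∑ l, ginv i l * bb l) * v j))
          + ((-2*c)*Q + Q*(∑ i, ∑ j, g i j * (v i * (∑ l, ginv j l * bb l)))) := by
        simp only [Finset.sum_add_distrib, ← Finset.mul_sum]; rfl
    _ = -2 * c * Q := by rw [key1, key2]; ring

/-- Along any solution of (the first equation of) the conformal circle system for a flat
pseudo-Riemannian metric `g`, one has `d/dτ ⟨γ',γ'⟩ = −2 b(γ') ⟨γ',γ'⟩`, so the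
nullity/non-nullity of the velocity is preserved: if `⟨γ'(0),γ'(0)⟩ ≠ 0` then
`⟨γ'(τ),γ'(τ)⟩ ≠ 0` for all `τ`. -/
theorem stmt8 (n : ℕ) (hn : 3 ≤ n)
    (g ginv : Matrix (Fin n) (Fin n) ℝ) (hgsymm : g.IsSymm) (hinv : g * ginv = 1)
    (S : Fin n → Fin n → Fin n → Fin n → ℝ)
    (hS : ∀ i j k l, S i j k l =
      (if i = k then (1:ℝ) else 0) * (if j = l then (1:ℝ) else 0)
      + (if i = l then (1:ℝ) else 0) * (if j = k then (1:ℝ) else 0)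
      - g i j * ginv k l)
    (γ : ℝ → Fin n → ℝ) (hsm : ContDiff ℝ (⊤ : ℕ∞) γ)
    (b : ℝ → Fin n → ℝ) (hbcont : Continuous b)
    (heq : ∀ (τ : ℝ) (i : Fin n),
      deriv (fun t => deriv (fun s => γ s i) t) τ
        = - ∑ j, ∑ k, ∑ l,
            S j k i l * b τ l * deriv (fun s => γ s j) τ * deriv (fun s => γ s k) τ)
    (hnonnull0 :
      (∑ i, ∑ j, g i j * deriv (fun s => γ s i) 0 * deriv (fun s => γ s j) 0) ≠ 0) :
    ∀ τ : ℝ,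
      (∑ i, ∑ j, g i j * deriv (fun s => γ s i) τ * deriv (fun s => γ s j) τ) ≠ 0 := by
  intro τ
  set v : Fin n → ℝ → ℝ := fun i t => deriv (fun s => γ s i) t with hvdef
  have hproj : ∀ i : Fin n, ContDiff ℝ (⊤ : ℕ∞) (fun s => γ s i) := fun i =>
    (ContinuousLinearMap.proj i : (Fin n → ℝ) →L[ℝ] ℝ).contDiff.comp hsm
  have hvsm : ∀ i, ContDiff ℝ (⊤ : ℕ∞) (v i) := fun i =>
    (contDiff_infty_iff_deriv.mp (hproj i)).2
  have hvdiff : ∀ i, Differentiable ℝ (v i) := fun i => (hvsm i).differentiable (by simp)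
  have hvcont : ∀ i, Continuous (v i) := fun i => (hvsm i).continuous
  set c : ℝ → ℝ := fun t => ∑ l, b t l * v l t with hcdef
  have hccont : Continuous c := continuous_finset_sum _ fun l _ =>
    ((continuous_apply l).comp hbcont).mul (hvcont l)
  set Q : ℝ → ℝ := fun t => ∑ i, ∑ j, g i j * v i t * v j t with hQdef
  have hsymm : ∀ i j, g i j = g j i := fun i j => (hgsymm.apply i j).symm
  have hinv' : ∀ m l, (∑ i, g m i * ginv i l) = if m = l then (1:ℝ) else 0 := fun m l => by
    have h := congrFun (congrFun hinv m) l
    simpa [Matrix.mul_apply, Matrix.one_apply] using h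
  have hQderiv : ∀ t, HasDerivAt Q (-2 * c t * Q t) t := by
    intro t
    have hterm : ∀ i, HasDerivAt (v i) (deriv (v i) t) t := fun i =>
      ((hvdiff i) t).hasDerivAt
    have h1 : HasDerivAt Q
        (∑ i, ∑ j, g i j * (deriv (v i) t * v j t + v i t * deriv (v j) t)) t := by
      apply HasDerivAt.fun_sum
      intro i _
      apply HasDerivAt.fun_sum
      intro j _
      have h2 := (((hterm i).const_mul (g i j)).fun_mul (hterm j))
      exact h2.congr_deriv (by ring)
    convert h1 using 1
    have hw : ∀ i, deriv (v i) t
        = -(∑ p, ∑ k, ∑ l, ((if p = i then (1:ℝ) else 0) * (if k = l then (1:ℝ) else 0)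
            + (if p = l then (1:ℝ) else 0) * (if k = i then (1:ℝ) else 0)
            - g p k * ginv i l) * b t l * v p t * v k t) := by
      intro i
      have h3 := heq t i
      simp only [hS] at h3
      exact h3
    rw [show (-2 * c t * Q t)
        = -2 * (∑ l, b t l * v l t) * (∑ i, ∑ j, g i j * v i t * v j t) from rfl]
    rw [← cc_alg n g ginv hsymm hinv' (fun i => v i t) (b t)]
    exact (Finset.sum_congr rfl fun i _ => Finset.sum_congr rfl fun j _ => by
      rw [hw i, hw j]).symm
  -- integrating factor
  have hB : ∀ t : ℝ, HasDerivAt (fun u => ∫ s in (0:ℝ)..u, 2 * c s) (2 * c t) t := fun t =>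
    ((continuous_const.mul hccont).integral_hasStrictDerivAt 0 t).hasDerivAt
  set F : ℝ → ℝ := fun t => Q t * Real.exp (∫ s in (0:ℝ)..t, 2 * c s) with hFdef
  have hF : ∀ t, HasDerivAt F 0 t := by
    intro t
    have hE : HasDerivAt (fun u => Real.exp (∫ s in (0:ℝ)..u, 2 * c s))
        (Real.exp (∫ s in (0:ℝ)..t, 2 * c s) * (2 * c t)) t := (hB t).exp
    have h4 := (hQderiv t).fun_mul hE
    exact h4.congr_deriv (by ring)
  have hFdiff : Differentiable ℝ F := fun t => (hF t).differentiableAt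
  have hconst : F τ = F 0 := is_const_of_deriv_eq_zero hFdiff (fun x => (hF x).deriv) τ 0
  have hF0 : F 0 = Q 0 := by
    show Q 0 * Real.exp (∫ s in (0:ℝ)..(0:ℝ), 2 * c s) = Q 0
    simp
  show Q τ ≠ 0
  intro h0
  apply hnonnull0
  show Q 0 = 0
  rw [← hF0, ← hconst]
  show Q τ * _ = 0
  rw [h0, zero_mul]
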